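/- Let G be a linearly ordered abelian group that is generated as a group by elements g_1, …, g_t ∈ G. Then there exist vectors v_1, …, v_t ∈ ℝ^t such that for all integers α_1, …, α_t ∈ ℤ: α_1·g_1 + … + α_t·g_t ≤ 0 in G if and only if α_1·v_1 + … + α_t·v_t ≤_lex 0 in ℝ^t. -/

import Mathlib

open Finset

section Holder
variable {G : Type*} [AddCommGroup G] [LinearOrder G] [IsOrderedAddMonoid G]

/-- The lower Dedekind set of rationals `p/q` with `p•u ≤ q•x`. -/
def hSet (u x : G) : Set ℝ :=
  {r | ∃ (p : ℤ) (q : ℤ), 0 < q ∧ r = (p : ℝ) / (q : ℝ) ∧ p • u ≤ q • x}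

noncomputable def hF (u x : G) : ℝ := sSup (hSet u x)

/-- Boundedness of `x` relative to `u`. -/
def hBdd (u x : G) : Prop := ∃ N : ℕ, -((N:ℤ) • u) ≤ x ∧ x ≤ (N:ℤ) • u

variable {u : G} (hu : 0 < u)

lemma hBdd.zero : hBdd u 0 := ⟨0, by simp⟩

lemma hBdd.neg {x : G} (h : hBdd u x) : hBdd u (-x) := by
  obtain ⟨N, h1, h2⟩ := h
  exact ⟨N, by simpa using neg_le_neg h2, by simpa using neg_le_neg h1⟩

lemma hBdd.add {x y : G} (hx : hBdd u x) (hy : hBdd u y) : hBdd u (x + y) := by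
  obtain ⟨N, h1, h2⟩ := hx
  obtain ⟨M, h3, h4⟩ := hy
  refine ⟨N + M, ?_, ?_⟩
  · push_cast [add_smul]
    rw [neg_add]
    exact add_le_add h1 h3
  · push_cast [add_smul]
    exact add_le_add h2 h4

lemma hBdd.of_abs_le {x : G} (h : |x| ≤ u) : hBdd u x :=
  ⟨1, by push_cast; simpa using neg_le_of_abs_le h, by push_cast; simpa using le_of_abs_le h⟩

lemma hBdd.sum {ι : Type*} (s : Finset ι) (x : ι → G) (hb : ∀ i ∈ s, hBdd u (x i)) :
    hBdd u (∑ i ∈ s, x i) := by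
  classical
  induction s using Finset.induction_on with
  | empty => simpa using hBdd.zero
  | insert a s' hni ih =>
    rw [Finset.sum_insert hni]
    exact (hb a (Finset.mem_insert_self a s')).add
      (ih fun i hi => hb i (Finset.mem_insert_of_mem hi))

lemma hBdd.zsmul {x : G} (h : hBdd u x) (n : ℤ) : hBdd u (n • x) := by
  induction n using Int.induction_on with
  | zero => simpa using hBdd.zero
  | succ k ih => rw [add_smul, one_smul]; exact ih.add h
  | pred k ih => rw [sub_smul, one_smul, sub_eq_add_neg]; exact ih.add h.neg

lemma hSet_nonempty {x : G} (h : hBdd u x) : (hSet u x).Nonempty := by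
  obtain ⟨N, h1, _⟩ := h
  exact ⟨(-(N:ℤ) : ℝ), -(N:ℤ), 1, one_pos, by norm_num, by simpa [neg_smul] using h1⟩

include hu in
lemma hSet_bddAbove {x : G} (h : hBdd u x) : BddAbove (hSet u x) := by
  obtain ⟨N, _, hN⟩ := h
  refine ⟨(N : ℝ), fun r hr => ?_⟩
  obtain ⟨p, q, hq, rfl, hle⟩ := hr
  have h1 : q • x ≤ q • ((N:ℤ) • u) := smul_le_smul_of_nonneg_left hN hq.le
  rw [smul_smul] at h1
  have hpq : p ≤ q * N := (zsmul_le_zsmul_iff_left hu).mp (hle.trans h1)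
  rw [div_le_iff₀ (by exact_mod_cast hq)]
  calc (p:ℝ) ≤ ((q * N : ℤ) : ℝ) := by exact_mod_cast hpq
    _ = (N:ℝ) * (q:ℝ) := by push_cast; ring

include hu in
lemma hF_le {x : G} (hb : hBdd u x) {p q : ℤ} (hq : 0 < q) (h : q • x ≤ p • u) :
    hF u x ≤ (p : ℝ) / (q : ℝ) := by
  apply csSup_le (hSet_nonempty hb)
  rintro r ⟨p', q', hq', rfl, hle⟩
  rw [div_le_div_iff₀ (by exact_mod_cast hq') (by exact_mod_cast hq)]
  have key : (q * p') • u ≤ (q' * p) • u := by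
    calc (q * p') • u = q • (p' • u) := by rw [smul_smul]
      _ ≤ q • (q' • x) := smul_le_smul_of_nonneg_left hle hq.le
      _ = q' • (q • x) := by rw [smul_smul, smul_smul, mul_comm]
      _ ≤ q' • (p • u) := smul_le_smul_of_nonneg_left h hq'.le
      _ = (q' * p) • u := by rw [smul_smul]
  have := (zsmul_le_zsmul_iff_left hu).mp key
  calc (p':ℝ) * q = ((q * p' : ℤ) : ℝ) := by push_cast; ring
    _ ≤ ((q' * p : ℤ) : ℝ) := by exact_mod_cast this
    _ = (p:ℝ) * q' := by push_cast; ring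

include hu in
lemma hF_ge {x : G} (hb : hBdd u x) {p q : ℤ} (hq : 0 < q) (h : p • u ≤ q • x) :
    (p : ℝ) / (q : ℝ) ≤ hF u x :=
  le_csSup (hSet_bddAbove hu hb) ⟨p, q, hq, rfl, h⟩

include hu in
/-- bracketing: for each `n > 0` there is an integer `p` with `p•u ≤ n•x ≤ (p+1)•u`. -/
lemma hF_bracket {x : G} (hb : hBdd u x) {n : ℤ} (hn : 0 < n) :
    ∃ p : ℤ, p • u ≤ n • x ∧ n • x ≤ (p + 1) • u := by
  obtain ⟨N, h1, h2⟩ := hb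
  have hbd : ∀ z : ℤ, z • u ≤ n • x → z ≤ n * N := by
    intro z hz
    have : n • x ≤ (n * N) • u := by
      rw [← smul_smul]; exact smul_le_smul_of_nonneg_left h2 hn.le
    exact (zsmul_le_zsmul_iff_left hu).mp (hz.trans this)
  have hne : ∃ z : ℤ, z • u ≤ n • x := by
    refine ⟨-(n * N), ?_⟩
    have : (-(N:ℤ)) • u ≤ x := by simpa [neg_smul] using h1
    calc (-(n * N)) • u = n • ((-(N:ℤ)) • u) := by rw [smul_smul]; ring_nf
      _ ≤ n • x := smul_le_smul_of_nonneg_left this hn.le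
  obtain ⟨p, hp, hmax⟩ := Int.exists_greatest_of_bdd ⟨n * N, hbd⟩ hne
  refine ⟨p, hp, ?_⟩
  by_contra hcon
  push_neg at hcon
  exact absurd (hmax (p+1) hcon.le) (by omega)

include hu in
lemma hF_add {x y : G} (hx : hBdd u x) (hy : hBdd u y) :
    hF u (x + y) = hF u x + hF u y := by
  have key : ∀ n : ℕ, 0 < n → |hF u (x + y) - (hF u x + hF u y)| ≤ 4 / (n:ℝ) := by
    intro n hn
    have hn' : (0:ℤ) < (n:ℤ) := by exact_mod_cast hn
    obtain ⟨p, hp1, hp2⟩ := hF_bracket hu hx hn'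
    obtain ⟨r, hr1, hr2⟩ := hF_bracket hu hy hn'
    have hnR : (0:ℝ) < ((n:ℤ):ℝ) := by exact_mod_cast hn
    -- bounds for x
    have hx1 : (p:ℝ)/(n:ℤ) ≤ hF u x := hF_ge hu hx hn' hp1
    have hx2 : hF u x ≤ ((p+1:ℤ):ℝ)/(n:ℤ) := hF_le hu hx hn' hp2
    have hy1 : (r:ℝ)/(n:ℤ) ≤ hF u y := hF_ge hu hy hn' hr1
    have hy2 : hF u y ≤ ((r+1:ℤ):ℝ)/(n:ℤ) := hF_le hu hy hn' hr2
    -- bounds for x+y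
    have hs1 : (p + r) • u ≤ (n:ℤ) • (x + y) := by
      rw [add_smul, smul_add]; exact add_le_add hp1 hr1
    have hs2 : (n:ℤ) • (x + y) ≤ (p + 1 + (r + 1)) • u := by
      rw [add_smul, smul_add]; exact add_le_add hp2 hr2
    have hz1 : ((p+r:ℤ):ℝ)/(n:ℤ) ≤ hF u (x+y) := hF_ge hu (hx.add hy) hn' hs1
    have hz2 : hF u (x+y) ≤ ((p+1+(r+1):ℤ):ℝ)/(n:ℤ) := hF_le hu (hx.add hy) hn' hs2
    rw [abs_le]
    have e1 : ((p:ℝ)+1)/(n:ℤ) = (p:ℝ)/(n:ℤ) + 1/(n:ℤ) := add_div _ _ _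
    have e2 : ((r:ℝ)+1)/(n:ℤ) = (r:ℝ)/(n:ℤ) + 1/(n:ℤ) := add_div _ _ _
    have e3 : ((p:ℝ)+(r:ℝ))/(n:ℤ) = (p:ℝ)/(n:ℤ) + (r:ℝ)/(n:ℤ) := add_div _ _ _
    have e4 : ((p:ℝ)+1+((r:ℝ)+1))/(n:ℤ) = (p:ℝ)/(n:ℤ) + (r:ℝ)/(n:ℤ) + 1/(n:ℤ) + 1/(n:ℤ) := by
      field_simp; ring
    have e5 : (4:ℝ)/(n:ℝ) = 4 * (1/((n:ℤ):ℝ)) := by push_cast; ring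
    have hpos : 0 < 1/((n:ℤ):ℝ) := by positivity
    push_cast at hz1 hz2 hx1 hx2 hy1 hy2 e1 e2 e3 e4 e5 ⊢
    constructor <;> linarith
  by_contra hne
  have habs : 0 < |hF u (x + y) - (hF u x + hF u y)| := by
    apply abs_pos.mpr; intro h; exact hne (by linarith [sub_eq_zero.mp h])
  obtain ⟨n, hn⟩ := exists_nat_gt (4 / |hF u (x + y) - (hF u x + hF u y)|)
  have hn0 : 0 < n := by
    by_contra h
    push_neg at h
    interval_cases n
    simp at hn
    nlinarith [div_pos (by norm_num : (0:ℝ) < 4) habs]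
  have h4 := key n hn0
  rw [div_lt_iff₀ habs] at hn
  have : 4/(n:ℝ) < |hF u (x + y) - (hF u x + hF u y)| := by
    rw [div_lt_iff₀ (by exact_mod_cast hn0)]
    nlinarith
  linarith

include hu in
lemma hF_zero : hF u 0 = 0 := by
  apply le_antisymm
  · have := hF_le hu hBdd.zero (p := 0) (q := 1) one_pos (by simp)
    simpa using this
  · have := hF_ge hu hBdd.zero (p := 0) (q := 1) one_pos (by simp)
    simpa using this
include hu in
lemma hF_self : hF u u = 1 := by
  have hb : hBdd u u := ⟨1, by push_cast; rw [one_smul]; exact neg_le_self hu.le, by push_cast; rw [one_smul]⟩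
  apply le_antisymm
  · have := hF_le hu hb (p := 1) (q := 1) one_pos (by simp)
    simpa using this
  · have := hF_ge hu hb (p := 1) (q := 1) one_pos (by simp)
    simpa using this

include hu in
lemma hF_neg {x : G} (hx : hBdd u x) : hF u (-x) = - hF u x := by
  have := hF_add hu hx hx.neg
  rw [add_neg_cancel, hF_zero hu] at this
  linarith

include hu in
lemma hF_zsmul {x : G} (hx : hBdd u x) (n : ℤ) : hF u (n • x) = n * hF u x := by
  induction n using Int.induction_on with
  | zero => simpa using hF_zero hu
  | succ k ih =>
    rw [add_smul, one_smul, hF_add hu (hx.zsmul k) hx, ih]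
    push_cast; ring
  | pred k ih =>
    rw [sub_smul, one_smul, sub_eq_add_neg, hF_add hu (hx.zsmul (-k)) hx.neg, ih, hF_neg hu hx]
    push_cast; ring

include hu in
lemma hF_nonneg {x : G} (hb : hBdd u x) (h : 0 ≤ x) : 0 ≤ hF u x := by
  have := hF_ge hu hb (p := 0) (q := 1) one_pos (by simpa using h)
  simpa using this

include hu in
lemma hF_nonpos {x : G} (hb : hBdd u x) (h : x ≤ 0) : hF u x ≤ 0 := by
  have := hF_le hu hb (p := 0) (q := 1) one_pos (by simpa using h)
  simpa using this

include hu in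
lemma lt_zero_of_hF_lt {x : G} (hb : hBdd u x) (h : hF u x < 0) : x < 0 := by
  by_contra hc
  push_neg at hc
  exact absurd (hF_nonneg hu hb hc) (not_le.mpr h)

include hu in
lemma zero_lt_of_hF_lt {x : G} (hb : hBdd u x) (h : 0 < hF u x) : 0 < x := by
  by_contra hc
  push_neg at hc
  exact absurd (hF_nonpos hu hb hc) (not_le.mpr h)


include hu in
lemma hF_sum {ι : Type*} (s : Finset ι) (x : ι → G) (hb : ∀ i ∈ s, hBdd u (x i)) :
    hF u (∑ i ∈ s, x i) = ∑ i ∈ s, hF u (x i) := by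
  classical
  induction s using Finset.induction_on with
  | empty => simpa using hF_zero hu
  | insert a s' hni ih =>
    rw [Finset.sum_insert hni, Finset.sum_insert hni,
      hF_add hu (hb a (Finset.mem_insert_self a s'))
        (hBdd.sum s' x fun i hi => hb i (Finset.mem_insert_of_mem hi)),
      ih fun i hi => hb i (Finset.mem_insert_of_mem hi)]

end Holder

section LexLemmas

lemma lex_le_zero_iff {n : ℕ} (y : Fin n → ℝ) :
    toLex y ≤ toLex (0 : Fin n → ℝ) ↔
      y = 0 ∨ ∃ i, (∀ j, j < i → y j = 0) ∧ y i < 0 := by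
  rw [le_iff_lt_or_eq]
  constructor
  · rintro (h | h)
    · obtain ⟨i, hj, hi⟩ := h
      exact Or.inr ⟨i, hj, hi⟩
    · exact Or.inl (toLex.injective h)
  · rintro (rfl | ⟨i, hj, hi⟩)
    · exact Or.inr rfl
    · exact Or.inl ⟨i, hj, hi⟩

lemma lex_le_zero_of_head_neg {n : ℕ} (y : Fin (n+1) → ℝ) (h : y 0 < 0) :
    toLex y ≤ toLex (0 : Fin (n+1) → ℝ) :=
  (lex_le_zero_iff y).mpr (Or.inr ⟨0, fun j hj => absurd hj (Fin.not_lt_zero j), h⟩)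

lemma not_lex_le_zero_of_head_pos {n : ℕ} (y : Fin (n+1) → ℝ) (h : 0 < y 0) :
    ¬ toLex y ≤ toLex (0 : Fin (n+1) → ℝ) := by
  rw [lex_le_zero_iff]
  rintro (rfl | ⟨i, hj, hi⟩)
  · simp at h
  · rcases eq_or_ne i 0 with rfl | hne
    · exact absurd h (not_lt.mpr hi.le)
    · have := hj 0 (Fin.pos_of_ne_zero hne)
      rw [this] at h; exact lt_irrefl _ h

lemma lex_le_zero_cons_iff {n : ℕ} (y : Fin (n+1) → ℝ) (h0 : y 0 = 0) :
    (toLex y ≤ toLex (0 : Fin (n+1) → ℝ)) ↔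
      (toLex (Fin.tail y) ≤ toLex (0 : Fin n → ℝ)) := by
  rw [lex_le_zero_iff, lex_le_zero_iff]
  constructor
  · rintro (rfl | ⟨i, hj, hi⟩)
    · exact Or.inl rfl
    · rcases eq_or_ne i 0 with rfl | hne
      · rw [h0] at hi; exact absurd hi (lt_irrefl 0)
      · obtain ⟨i', rfl⟩ := Fin.eq_succ_of_ne_zero hne
        refine Or.inr ⟨i', fun j hjlt => ?_, hi⟩
        exact hj j.succ (by rwa [Fin.succ_lt_succ_iff])
  · rintro (ht | ⟨i, hj, hi⟩)
    · refine Or.inl (funext fun j => ?_)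
      rcases Fin.eq_zero_or_eq_succ j with rfl | ⟨j', rfl⟩
      · exact h0
      · have := congrFun ht j'
        simpa [Fin.tail] using this
    · refine Or.inr ⟨i.succ, fun j hjlt => ?_, hi⟩
      rcases Fin.eq_zero_or_eq_succ j with rfl | ⟨j', rfl⟩
      · exact h0
      · exact hj j' (by rwa [Fin.succ_lt_succ_iff] at hjlt)

/-- pad a vector of length m to length n with zeros -/
def padVec {m n : ℕ} (hmn : m ≤ n) (w : Fin m → ℝ) : Fin n → ℝ :=
  fun l => if h : (l : ℕ) < m then w ⟨l, h⟩ else 0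

lemma lex_le_zero_pad_iff {m n : ℕ} (hmn : m ≤ n) (w : Fin m → ℝ) :
    (toLex (padVec hmn w) ≤ toLex (0 : Fin n → ℝ)) ↔
      (toLex w ≤ toLex (0 : Fin m → ℝ)) := by
  rw [lex_le_zero_iff, lex_le_zero_iff]
  constructor
  · rintro (hz | ⟨i, hj, hi⟩)
    · refine Or.inl (funext fun j => ?_)
      have := congrFun hz (Fin.castLE hmn j)
      simpa [padVec, j.isLt] using this
    · have him : (i : ℕ) < m := by
        by_contra hc
        rw [padVec] at hi
        simp only [dif_neg hc] at hi
        exact lt_irrefl _ hi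
      refine Or.inr ⟨⟨i, him⟩, fun j hjlt => ?_, by simpa [padVec, him] using hi⟩
      have := hj (Fin.castLE hmn j) (by simpa [Fin.lt_def] using hjlt)
      simpa [padVec, j.isLt] using this
  · rintro (rfl | ⟨i, hj, hi⟩)
    · refine Or.inl (funext fun l => ?_)
      by_cases h : (l : ℕ) < m <;> simp [padVec, h]
    · refine Or.inr ⟨Fin.castLE hmn i, fun j hjlt => ?_, by simpa [padVec, i.isLt] using hi⟩
      have hjm : (j : ℕ) < m := lt_of_lt_of_le (by simpa [Fin.lt_def] using hjlt) i.isLt.le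
      have := hj ⟨j, hjm⟩ (by simpa [Fin.lt_def] using hjlt)
      simpa [padVec, hjm] using this

end LexLemmas
section Main

open Module

theorem aux_stmt {G : Type*} [AddCommGroup G] [LinearOrder G] [IsOrderedAddMonoid G] :
    ∀ t : ℕ, ∀ g : Fin t → G,
    ∃ v : Fin t → (Fin t → ℝ), ∀ α : Fin t → ℤ,
      (∑ i, α i • g i) ≤ 0 ↔ toLex (∑ i, α i • v i) ≤ toLex (0 : Fin t → ℝ) := by
  intro t
  induction t using Nat.strong_induction_on with
  | _ t IH =>
  obtain _ | n := t
  · exact fun g => ⟨0, fun α => by simp⟩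
  intro g
  by_cases hg0 : ∀ i, g i = 0
  · exact ⟨0, fun α => by simp [hg0]⟩
  push_neg at hg0
  obtain ⟨i0, hi0⟩ := hg0
  -- choose the generator with maximal absolute value
  obtain ⟨k, -, hk⟩ := Finset.exists_max_image Finset.univ (fun i => |g i|)
    ⟨i0, Finset.mem_univ i0⟩
  set u : G := |g k| with hu_def
  have hu : 0 < u := lt_of_lt_of_le (abs_pos.mpr hi0) (hk i0 (Finset.mem_univ i0))
  have hbg : ∀ i, hBdd u (g i) := fun i => hBdd.of_abs_le (hk i (Finset.mem_univ i))
  have hbu : hBdd u u := hBdd.of_abs_le (le_of_eq (abs_of_pos hu))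
  have hfk0 : hF u (g k) ≠ 0 := by
    rcases abs_choice (g k) with h | h
    · rw [show g k = u from h.symm.trans hu_def.symm]
      rw [hF_self hu]; norm_num
    · rw [show g k = -u by rw [hu_def, h, neg_neg]]
      rw [hF_neg hu hbu, hF_self hu]; norm_num
  -- the real-valued linear functional on ℤ^(n+1)
  set F : (Fin (n+1) → ℤ) →ₗ[ℤ] ℝ :=
    { toFun := fun α => ∑ i, (α i : ℝ) * hF u (g i)
      map_add' := by
        intro a b
        simp only [Pi.add_apply, Int.cast_add, add_mul]
        rw [Finset.sum_add_distrib]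
      map_smul' := by
        intro c a
        simp only [Pi.smul_apply, smul_eq_mul, Int.cast_mul, RingHom.id_apply,
          zsmul_eq_mul, Finset.mul_sum, mul_assoc] } with hF_def
  have hFapp : ∀ α : Fin (n+1) → ℤ, F α = ∑ i, (α i : ℝ) * hF u (g i) := fun _ => rfl
  have hFeq : ∀ α : Fin (n+1) → ℤ, hF u (∑ i, α i • g i) = F α := by
    intro α
    rw [hF_sum hu _ _ fun i _ => (hbg i).zsmul (α i), hFapp]
    exact Finset.sum_congr rfl fun i _ => by rw [hF_zsmul hu (hbg i)]
  have hbsum : ∀ α : Fin (n+1) → ℤ, hBdd u (∑ i, α i • g i) :=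
    fun α => hBdd.sum _ _ fun i _ => (hbg i).zsmul (α i)
  set K := LinearMap.ker F with hK_def
  set m := finrank ℤ K with hm_def
  set b : Basis (Fin m) ℤ K := Module.finBasis ℤ K with hb_def
  -- m ≤ n
  have hmn : m ≤ n := by
    set L : K →ₗ[ℤ] ({j : Fin (n+1) // j ≠ k} → ℤ) :=
      (LinearMap.pi fun (j : {j : Fin (n+1) // j ≠ k}) =>
        LinearMap.proj (R := ℤ) (φ := fun _ : Fin (n+1) => ℤ) j.1) ∘ₗ K.subtype with hL_def
    have hinj : Function.Injective L := by
      rw [← LinearMap.ker_eq_bot, LinearMap.ker_eq_bot']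
      intro x hx
      have hcoord : ∀ j : Fin (n+1), j ≠ k → (x : Fin (n+1) → ℤ) j = 0 := by
        intro j hj
        exact congrFun hx ⟨j, hj⟩
      have hxK : F (x : Fin (n+1) → ℤ) = 0 := x.2
      have hsingle : F (x : Fin (n+1) → ℤ) = ((x : Fin (n+1) → ℤ) k : ℝ) * hF u (g k) := by
        rw [hFapp]
        refine Fintype.sum_eq_single k fun i hik => ?_
        rw [hcoord i hik]; simp
      have hxk0 : (x : Fin (n+1) → ℤ) k = 0 := by
        rw [hsingle] at hxK
        rcases mul_eq_zero.mp hxK with h | h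
        · exact_mod_cast h
        · exact absurd h hfk0
      ext j
      by_cases hj : j = k
      · rw [hj]; exact hxk0
      · exact hcoord j hj
    have hcard : Fintype.card {j : Fin (n+1) // j ≠ k} = n := by
      simp [Fintype.card_subtype_compl]
    calc m ≤ finrank ℤ ({j : Fin (n+1) // j ≠ k} → ℤ) :=
          LinearMap.finrank_le_finrank_of_injective hinj
      _ = n := by rw [Module.finrank_pi ℤ, hcard]
  -- induction hypothesis applied to the kernel basis combinations
  obtain ⟨w, hw⟩ := IH m (Nat.lt_succ_of_le hmn)
    (fun j => ∑ i, ((b j : Fin (n+1) → ℤ) i) • g i)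
  -- splitting of the quotient
  haveI hQtf : NoZeroSMulDivisors ℤ ((Fin (n+1) → ℤ) ⧸ K) := by
    constructor
    intro c x hcx
    rcases eq_or_ne c 0 with rfl | hc
    · exact Or.inl rfl
    right
    obtain ⟨y, rfl⟩ := Submodule.mkQ_surjective K x
    rw [← map_smul, Submodule.mkQ_apply, Submodule.Quotient.mk_eq_zero K] at hcx
    have hFy : F (c • y) = 0 := hcx
    rw [map_smul, zsmul_eq_mul] at hFy
    have : F y = 0 := by
      rcases mul_eq_zero.mp hFy with h | h
      · exact absurd (by exact_mod_cast h) hc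
      · exact h
    rw [Submodule.mkQ_apply, Submodule.Quotient.mk_eq_zero K]
    exact this
  haveI : Module.Free ℤ ((Fin (n+1) → ℤ) ⧸ K) := Module.free_of_finite_type_torsion_free'
  obtain ⟨s, hs⟩ := Module.projective_lifting_property K.mkQ LinearMap.id
    (Submodule.mkQ_surjective K)
  set D : (Fin (n+1) → ℤ) →ₗ[ℤ] (Fin (n+1) → ℤ) :=
    LinearMap.id - s ∘ₗ K.mkQ with hD_def
  have hDapp : ∀ x : Fin (n+1) → ℤ, D x = x - s (K.mkQ x) := fun x => rfl
  have hρmem : ∀ x : Fin (n+1) → ℤ, D x ∈ K := by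
    intro x
    have h1 := LinearMap.congr_fun hs (K.mkQ x)
    simp only [LinearMap.comp_apply, LinearMap.id_apply] at h1
    rw [hDapp, ← Submodule.Quotient.mk_eq_zero K, ← Submodule.mkQ_apply, map_sub, h1, sub_self]
  set ρ : (Fin (n+1) → ℤ) →ₗ[ℤ] K :=
    LinearMap.codRestrict K D hρmem with hρ_def
  have hρK : ∀ (x : Fin (n+1) → ℤ) (hx : x ∈ K), ρ x = ⟨x, hx⟩ := by
    intro x hx
    apply Subtype.ext
    show D x = x
    have h0 : K.mkQ x = 0 := by rw [Submodule.mkQ_apply, Submodule.Quotient.mk_eq_zero K]; exact hx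
    rw [hDapp, h0, map_zero, sub_zero]
  set crd : (Fin (n+1) → ℤ) →ₗ[ℤ] (Fin m → ℤ) := (b.equivFun.toLinearMap) ∘ₗ ρ with hcrd_def
  have hcrdK : ∀ (x : Fin (n+1) → ℤ) (hx : x ∈ K), crd x = b.equivFun ⟨x, hx⟩ := by
    intro x hx
    show b.equivFun (ρ x) = _
    rw [hρK x hx]
  -- padded vectors and the final construction
  set wpad : Fin m → Fin n → ℝ := fun j => padVec hmn (w j) with hwpad_def
  set τ : Fin (n+1) → Fin n → ℝ :=
    fun i => ∑ j, ((crd (Pi.single i 1)) j : ℝ) • wpad j with hτ_def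
  set v : Fin (n+1) → Fin (n+1) → ℝ := fun i => Fin.cons (hF u (g i)) (τ i) with hv_def
  refine ⟨v, fun α => ?_⟩
  set V : Fin (n+1) → ℝ := ∑ i, α i • v i with hV_def
  have hV0 : V 0 = F α := by
    rw [hV_def, Finset.sum_apply, hFapp]
    refine Finset.sum_congr rfl fun i _ => ?_
    rw [Pi.smul_apply, hv_def]
    show α i • (Fin.cons (hF u (g i)) (τ i) : Fin (n+1) → ℝ) 0 = _
    rw [Fin.cons_zero, zsmul_eq_mul]
  have hcrdsum : ∀ j : Fin m, (crd α) j = ∑ i, α i * (crd (Pi.single i 1)) j := by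
    intro j
    have h1 : α = ∑ i, α i • Pi.single i (1:ℤ) := by
      have := Finset.univ_sum_single α
      rw [← this]
      refine Finset.sum_congr rfl fun i _ => ?_
      ext l
      by_cases hl : l = i <;> simp [Pi.single_apply, hl]
    calc (crd α) j = (crd (∑ i, α i • Pi.single i (1:ℤ))) j := by rw [← h1]
      _ = (∑ i, α i • crd (Pi.single i (1:ℤ))) j := by rw [map_sum]; simp_rw [map_smul]
      _ = ∑ i, α i * (crd (Pi.single i 1)) j := by
          rw [Finset.sum_apply]
          exact Finset.sum_congr rfl fun i _ => by rw [Pi.smul_apply, smul_eq_mul]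
  have hVsucc : ∀ l : Fin n, V (Fin.succ l) = ∑ j, ((crd α) j : ℝ) * wpad j l := by
    intro l
    have h1 : V (Fin.succ l) = ∑ i, (α i : ℝ) * τ i l := by
      rw [hV_def, Finset.sum_apply]
      refine Finset.sum_congr rfl fun i _ => ?_
      rw [Pi.smul_apply, hv_def]
      show α i • (Fin.cons (hF u (g i)) (τ i) : Fin (n+1) → ℝ) (Fin.succ l) = _
      rw [Fin.cons_succ, zsmul_eq_mul]
    rw [h1]
    have h2 : ∀ i, τ i l = ∑ j, ((crd (Pi.single i 1)) j : ℝ) * wpad j l := by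
      intro i
      show (∑ j, ((crd (Pi.single i 1)) j : ℝ) • wpad j) l = _
      rw [Finset.sum_apply]
      exact Finset.sum_congr rfl fun j _ => by rw [Pi.smul_apply, smul_eq_mul]
    calc ∑ i, (α i : ℝ) * τ i l
        = ∑ i, ∑ j, (α i : ℝ) * (((crd (Pi.single i 1)) j : ℝ) * wpad j l) := by
          refine Finset.sum_congr rfl fun i _ => ?_
          rw [h2 i, Finset.mul_sum]
      _ = ∑ j, ∑ i, (α i : ℝ) * (((crd (Pi.single i 1)) j : ℝ) * wpad j l) := Finset.sum_comm
      _ = ∑ j, ((crd α) j : ℝ) * wpad j l := by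
          refine Finset.sum_congr rfl fun j _ => ?_
          rw [hcrdsum j]
          push_cast
          rw [Finset.sum_mul]
          exact Finset.sum_congr rfl fun i _ => by ring
  rcases lt_trichotomy (F α) 0 with hFα | hFα | hFα
  · have hx : ∑ i, α i • g i < 0 := lt_zero_of_hF_lt hu (hbsum α) (by rw [hFeq α]; exact hFα)
    exact ⟨fun _ => lex_le_zero_of_head_neg V (hV0 ▸ hFα), fun _ => hx.le⟩
  · -- F α = 0 : α is in the kernel
    have hαK : α ∈ K := by rw [hK_def, LinearMap.mem_ker]; exact hFα
    set c : Fin m → ℤ := b.equivFun ⟨α, hαK⟩ with hc_def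
    have hcrdα : crd α = c := hcrdK α hαK
    have hαsum : α = ∑ j, c j • (b j : Fin (n+1) → ℤ) := by
      have hrepr : (⟨α, hαK⟩ : K) = ∑ j, c j • b j := (Basis.sum_equivFun b ⟨α, hαK⟩).symm
      calc α = ((⟨α, hαK⟩ : K) : Fin (n+1) → ℤ) := rfl
        _ = ((∑ j, c j • b j : K) : Fin (n+1) → ℤ) := by rw [hrepr]
        _ = ∑ j, c j • (b j : Fin (n+1) → ℤ) := by
              rw [AddSubmonoidClass.coe_finset_sum]
              exact Finset.sum_congr rfl fun j _ => rfl
    have hxg : ∑ i, α i • g i = ∑ j, c j • (∑ i, ((b j : Fin (n+1) → ℤ) i) • g i) := by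
      calc ∑ i, α i • g i
          = ∑ i, (∑ j, c j * (b j : Fin (n+1) → ℤ) i) • g i := by
            refine Finset.sum_congr rfl fun i _ => ?_
            congr 1
            conv_lhs => rw [hαsum]
            rw [Finset.sum_apply]
            exact Finset.sum_congr rfl fun j _ => by rw [Pi.smul_apply, smul_eq_mul]
        _ = ∑ i, ∑ j, (c j * (b j : Fin (n+1) → ℤ) i) • g i := by
            refine Finset.sum_congr rfl fun i _ => ?_
            rw [Finset.sum_smul]
        _ = ∑ j, ∑ i, (c j * (b j : Fin (n+1) → ℤ) i) • g i := Finset.sum_comm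
        _ = ∑ j, c j • (∑ i, ((b j : Fin (n+1) → ℤ) i) • g i) := by
            refine Finset.sum_congr rfl fun j _ => ?_
            rw [Finset.smul_sum]
            exact Finset.sum_congr rfl fun i _ => (mul_smul _ _ _)
    have htail : Fin.tail V = padVec hmn (∑ j, c j • w j) := by
      funext l
      rw [Fin.tail]
      rw [hVsucc l, hcrdα]
      by_cases hl : (l : ℕ) < m
      · rw [padVec]
        simp only [dif_pos hl]
        rw [Finset.sum_apply]
        refine Finset.sum_congr rfl fun j _ => ?_
        rw [Pi.smul_apply, zsmul_eq_mul, hwpad_def]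
        show (c j : ℝ) * padVec hmn (w j) l = _
        rw [padVec]
        simp only [dif_pos hl]
      · rw [padVec]
        simp only [dif_neg hl]
        refine Finset.sum_eq_zero fun j _ => ?_
        rw [hwpad_def]
        show (c j : ℝ) * padVec hmn (w j) l = 0
        rw [padVec]
        simp only [dif_neg hl, mul_zero]
    have h0 : V 0 = 0 := by rw [hV0]; exact hFα
    rw [hxg, hw c]
    rw [show toLex (∑ i, α i • v i) = toLex V from rfl]
    rw [lex_le_zero_cons_iff V h0, htail, lex_le_zero_pad_iff]
  · have hx : 0 < ∑ i, α i • g i := zero_lt_of_hF_lt hu (hbsum α) (by rw [hFeq α]; exact hFα)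
    constructor
    · intro h
      exact absurd h (not_le.mpr hx)
    · intro h
      exact absurd h (not_lex_le_zero_of_head_pos V (hV0 ▸ hFα))

end Main

/-- If a linearly ordered abelian group `G` is generated by
`g 0, …, g (t-1)`, then there are vectors `v 0, …, v (t-1) ∈ ℝ^t` such that for all
integers `α 0, …, α (t-1)`: `∑ αᵢ • gᵢ ≤ 0` in `G` iff `∑ αᵢ • vᵢ ≤ 0` in the
lexicographic order on `ℝ^t`. -/
theorem stmt1 {G : Type*} [AddCommGroup G] [LinearOrder G] [IsOrderedAddMonoid G] {t : ℕ}
    (g : Fin t → G) (hgen : ∀ x : G, ∃ α : Fin t → ℤ, x = ∑ i, α i • g i) :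
    ∃ v : Fin t → (Fin t → ℝ), ∀ α : Fin t → ℤ,
      (∑ i, α i • g i) ≤ 0 ↔ toLex (∑ i, α i • v i) ≤ toLex (0 : Fin t → ℝ) := by
  exact aux_stmt t g
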